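/- Let E be a directed graph on a vertex type V with topological order O, let v, w be vertices with no path from w to v under E, and let u, x, y, z be vertices with: a path from w to u under E, an arc E u x, an arc E y z, a path from z to v under E, and O u < O z. Then there is no path from x to y under E and no path from z to u under E (so the arcs (u,x) and (y,z) do not lie on a common path in E), but there is a path from z to u under E + (v,w) (so the arcs (u,x) and (y,z) lie on a common path in E + (v,w)). -/

import Mathlib

/-- A compatible pair of traversed arcs `(u,x)` and `(y,z)` (with `u < z`)
is newly related: the two arcs do not lie on a common path in `E`, but they
do lie on a common path in `E + (v,w)`. -/
theorem compatible_arcs_newly_related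
    {V α : Type*} [LinearOrder α]
    (E : V → V → Prop) (O : V → α)
    (hOinj : Function.Injective O)
    (hOtopo : ∀ a b, E a b → O a < O b)
    (v w u x y z : V)
    (hnopath : ¬ Relation.ReflTransGen E w v)
    (hwu : Relation.ReflTransGen E w u)
    (hux : E u x)
    (hyz : E y z)
    (hzv : Relation.ReflTransGen E z v)
    (huz : O u < O z) :
    ¬ Relation.ReflTransGen E x y ∧
    ¬ Relation.ReflTransGen E z u ∧
    Relation.ReflTransGen (fun a b => E a b ∨ (a = v ∧ b = w)) z u := by
  have mono : ∀ a b, Relation.ReflTransGen E a b → O a ≤ O b := by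
    intro a b h
    induction h with
    | refl => exact le_rfl
    | tail _ hE ih => exact ih.trans (hOtopo _ _ hE).le
  refine ⟨?_, ?_, ?_⟩
  · intro hxy
    exact hnopath ((((hwu.tail hux).trans hxy).tail hyz).trans hzv)
  · intro hzu
    exact absurd (mono _ _ hzu) (not_le.mpr huz)
  · have lift : ∀ a b, Relation.ReflTransGen E a b →
        Relation.ReflTransGen (fun a b => E a b ∨ (a = v ∧ b = w)) a b := by
      intro a b h
      exact Relation.ReflTransGen.mono (fun _ _ h => Or.inl h) a b h
    exact ((lift _ _ hzv).tail (Or.inr ⟨rfl, rfl⟩)).trans (lift _ _ hwu)
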